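/- Let A_1A_2A_3A_4 be a non-degenerate tetrahedron in ℝ³ (the four vertices are affinely independent) and let A_0 be a point in its interior. Set u_i = u(A_0, A_i), and for each pair p, q let n_{pq} be a unit normal vector to the plane span{u_p, u_q}. Let c > 0, B̄_0 ≥ 0, and suppose B̄_1, B̄_2, B̄_3, B̄_4 > 0 satisfy B̄_1 + B̄_2 + B̄_3 + B̄_4 = c, B̄_1 + B̄_2 + B̄_3 = B̄_4 + B̄_0, and A_0 minimizes X ↦ Σ_{i=1}^4 B̄_i‖X − A_i‖. Then B̄_4 = (c − B̄_0)/2, B̄_1 = (|⟨u_4, n_{23}⟩| / |⟨u_1, n_{23}⟩|)·(c − B̄_0)/2, B̄_2 = (|⟨u_4, n_{13}⟩| / |⟨u_2, n_{13}⟩|)·(c − B̄_0)/2, and B̄_3 = (|⟨u_4, n_{12}⟩| / |⟨u_3, n_{12}⟩|)·(c − B̄_0)/2. In particular the weights are not determined by A_0 and c alone: they depend on the residual weight B̄_0 (negative answer to the inverse mixed weighted Fermat–Torricelli problem for tetrahedra). -/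

import Mathlib

open RealInnerProductSpace

private lemma norm_sub_hasFDerivAt {E : Type*} [NormedAddCommGroup E] [InnerProductSpace ℝ E]
    (a x : E) (h : x ≠ a) :
    HasFDerivAt (fun y : E => ‖y - a‖) (‖x - a‖⁻¹ • (innerSL ℝ (x - a))) x := by
  have hx : x - a ≠ 0 := sub_ne_zero.mpr h
  have h1 : HasFDerivAt (fun y : E => y - a) (ContinuousLinearMap.id ℝ E) x :=
    (hasFDerivAt_id x).sub_const a
  have h2 := (h1.inner ℝ h1).sqrt ((inner_self_ne_zero (𝕜 := ℝ)).mpr hx)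
  have hfun : (fun y : E => ‖y - a‖) = fun y : E => Real.sqrt ⟪y - a, y - a⟫ := by
    funext y
    rw [real_inner_self_eq_norm_mul_norm, Real.sqrt_mul_self (norm_nonneg _)]
  rw [hfun]
  convert h2 using 1
  have hnorm : Real.sqrt ⟪x - a, x - a⟫ = ‖x - a‖ := by
    rw [real_inner_self_eq_norm_mul_norm, Real.sqrt_mul_self (norm_nonneg _)]
  ext v
  simp only [ContinuousLinearMap.smul_apply, innerSL_apply_apply, ContinuousLinearMap.coe_comp',
    Function.comp_apply, ContinuousLinearMap.prod_apply, ContinuousLinearMap.coe_id', id_eq,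
    fderivInnerCLM_apply, smul_eq_mul, hnorm]
  rw [real_inner_comm v (x - a)]
  have hn : ‖x - a‖ ≠ 0 := norm_ne_zero_iff.mpr hx
  field_simp
  ring

set_option maxHeartbeats 1000000 in
/-- Negative answer to the inverse mixed weighted Fermat–Torricelli problem for
tetrahedra: if `A₀` is interior to the tetrahedron `A₁A₂A₃A₄` and the positive weights
`B̄ᵢ` satisfy `∑ B̄ᵢ = c`, the mass-flow condition `B̄₁+B̄₂+B̄₃ = B̄₄+B̄₀`, and `A₀`
minimizes `X ↦ ∑ B̄ᵢ‖X − Aᵢ‖`, then the weights are given by explicit formulas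
depending on the residual weight `B̄₀`. Indices are shifted: `A 0, …, A 3` are
`A₁, …, A₄`. -/
theorem inverse_mixed_weighted_fermat_torricelli_tetrahedron
    (A : Fin 4 → EuclideanSpace ℝ (Fin 3))
    (hA : AffineIndependent ℝ A)
    (A₀ : EuclideanSpace ℝ (Fin 3))
    (hA₀ : A₀ ∈ interior (convexHull ℝ (Set.range A)))
    (u : Fin 4 → EuclideanSpace ℝ (Fin 3))
    (hu : ∀ i, u i = ‖A i - A₀‖⁻¹ • (A i - A₀))
    (n23 n13 n12 : EuclideanSpace ℝ (Fin 3))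
    (hn23 : ‖n23‖ = 1 ∧ ⟪u 1, n23⟫ = 0 ∧ ⟪u 2, n23⟫ = 0)
    (hn13 : ‖n13‖ = 1 ∧ ⟪u 0, n13⟫ = 0 ∧ ⟪u 2, n13⟫ = 0)
    (hn12 : ‖n12‖ = 1 ∧ ⟪u 0, n12⟫ = 0 ∧ ⟪u 1, n12⟫ = 0)
    (c B₀ : ℝ) (hc : 0 < c) (hB₀ : 0 ≤ B₀)
    (B : Fin 4 → ℝ) (hB : ∀ i, 0 < B i)
    (hsum : B 0 + B 1 + B 2 + B 3 = c)
    (hflow : B 0 + B 1 + B 2 = B 3 + B₀)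
    (hmin : ∀ X : EuclideanSpace ℝ (Fin 3),
      ∑ i, B i * ‖A₀ - A i‖ ≤ ∑ i, B i * ‖X - A i‖) :
    B 3 = (c - B₀) / 2 ∧
    B 0 = (|⟪u 3, n23⟫| / |⟪u 0, n23⟫|) * ((c - B₀) / 2) ∧
    B 1 = (|⟪u 3, n13⟫| / |⟪u 1, n13⟫|) * ((c - B₀) / 2) ∧
    B 2 = (|⟪u 3, n12⟫| / |⟪u 2, n12⟫|) * ((c - B₀) / 2) := by
  classical
  -- the affine basis given by the tetrahedron
  have hcard : Fintype.card (Fin 4) = Module.finrank ℝ (EuclideanSpace ℝ (Fin 3)) + 1 := by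
    simp [finrank_euclideanSpace]
  have hspan : affineSpan ℝ (Set.range A) = ⊤ :=
    hA.affineSpan_eq_top_iff_card_eq_finrank_add_one.mpr hcard
  let b : AffineBasis (Fin 4) ℝ (EuclideanSpace ℝ (Fin 3)) := ⟨A, hA, hspan⟩
  have hb : ⇑b = A := rfl
  have hpos : ∀ j, 0 < b.coord j A₀ := by
    have := b.interior_convexHull
    rw [hb] at this
    rw [this] at hA₀
    exact hA₀
  have htsum : ∑ j, b.coord j A₀ = 1 := b.sum_coord_apply_eq_one A₀
  have hA0eq : ∑ j, b.coord j A₀ • A j = A₀ := by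
    have := b.linear_combination_coord_eq_self A₀
    rwa [hb] at this
  -- the vertices differ from A₀
  have hne : ∀ i, A i ≠ A₀ := by
    intro i h
    obtain ⟨j, hj⟩ : ∃ j : Fin 4, j ≠ i := by
      exact exists_ne i
    have : b.coord j A₀ = 0 := by
      rw [← h, ← hb, b.coord_apply, if_neg hj]
    linarith [hpos j]
  -- linear independence of u 0, u 1, u 2
  have hnormne : ∀ i, ‖A i - A₀‖ ≠ 0 := fun i =>
    norm_ne_zero_iff.mpr (sub_ne_zero.mpr (hne i))
  have hli : LinearIndependent ℝ ![u 0, u 1, u 2] := by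
    rw [Fintype.linearIndependent_iff]
    intro g hg
    set d : Fin 4 → ℝ := ![g 0 * ‖A 0 - A₀‖⁻¹, g 1 * ‖A 1 - A₀‖⁻¹, g 2 * ‖A 2 - A₀‖⁻¹, 0] with hd
    have hdcomb : ∑ j, d j • (A j - A₀) = 0 := by
      have : ∑ i : Fin 3, g i • ![u 0, u 1, u 2] i = 0 := hg
      rw [Fin.sum_univ_three] at this
      simp only [Matrix.cons_val_zero, Matrix.cons_val_one, Matrix.head_cons,
        Matrix.cons_val_two, Matrix.tail_cons, hu] at this
      rw [Fin.sum_univ_four]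
      simp only [hd, Matrix.cons_val_zero, Matrix.cons_val_one, Matrix.head_cons,
        Matrix.cons_val_two, Matrix.tail_cons, Matrix.cons_val_three, zero_smul, add_zero,
        mul_smul]
      exact this
    set w : Fin 4 → ℝ := fun j => d j - (∑ k, d k) * b.coord j A₀ with hw
    have hwsum : ∑ j, w j = 0 := by
      simp only [hw, Finset.sum_sub_distrib, ← Finset.mul_sum, htsum, mul_one, sub_self]
    have hwcomb : Finset.univ.weightedVSub A w = (0 : EuclideanSpace ℝ (Fin 3)) := by
      rw [Finset.weightedVSub_eq_linear_combination _ hwsum]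
      have : ∑ j, w j • A j = ∑ j, d j • (A j - A₀) := by
        simp only [hw, sub_smul, smul_sub, mul_smul, Finset.sum_sub_distrib, ← Finset.smul_sum]
        rw [hA0eq]
        rw [Finset.sum_smul]
      rw [this, hdcomb]
    have hwzero : ∀ j, w j = 0 :=
      (affineIndependent_iff_of_fintype (k := ℝ) A).mp hA w hwsum hwcomb
    have hdsum : ∑ k, d k = 0 := by
      have h3 := hwzero 3
      simp only [hw, hd, Matrix.cons_val_three, Matrix.cons_val_zero, Matrix.cons_val_one,
        Matrix.head_cons, Matrix.cons_val_two, Matrix.tail_cons] at h3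
      have ht3 := hpos 3
      have : (∑ k, d k) * b.coord 3 A₀ = 0 := by
        simp only [hd] at h3 ⊢
        linarith
      rcases mul_eq_zero.mp this with h | h
      · exact h
      · exact absurd h (ne_of_gt ht3)
    have hdzero : ∀ j, d j = 0 := by
      intro j
      have := hwzero j
      rw [hw] at this
      simp only [hdsum, zero_mul, sub_zero] at this
      exact this
    intro i
    fin_cases i
    · have := hdzero 0
      simp only [hd, Matrix.cons_val_zero] at this
      exact (mul_eq_zero.mp this).resolve_right (inv_ne_zero (hnormne 0))
    · have := hdzero 1
      simp only [hd, Matrix.cons_val_one, Matrix.head_cons] at this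
      exact (mul_eq_zero.mp this).resolve_right (inv_ne_zero (hnormne 1))
    · have := hdzero 2
      simp only [hd, Matrix.cons_val_two, Matrix.tail_cons, Matrix.head_cons] at this
      exact (mul_eq_zero.mp this).resolve_right (inv_ne_zero (hnormne 2))
  -- key nondegeneracy claim
  have key : ∀ n : EuclideanSpace ℝ (Fin 3), ‖n‖ = 1 → ⟪u 0, n⟫ = 0 → ⟪u 1, n⟫ = 0 → ⟪u 2, n⟫ = 0 → False := by
    intro n hn h0 h1 h2
    have hcard3 : Fintype.card (Fin 3) = Module.finrank ℝ (EuclideanSpace ℝ (Fin 3)) := by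
      simp [finrank_euclideanSpace]
    have hsp : Submodule.span ℝ (Set.range ![u 0, u 1, u 2]) = ⊤ :=
      hli.span_eq_top_of_card_eq_finrank hcard3
    have hmem : n ∈ Submodule.span ℝ (Set.range ![u 0, u 1, u 2]) := by
      rw [hsp]; trivial
    rw [Submodule.mem_span_range_iff_exists_fun] at hmem
    obtain ⟨cc, hcc⟩ := hmem
    have h4 : ⟪(∑ i, cc i • ![u 0, u 1, u 2] i : EuclideanSpace ℝ (Fin 3)), n⟫ = 0 := by
      rw [sum_inner, Fin.sum_univ_three]
      simp only [Matrix.cons_val_zero, Matrix.cons_val_one, Matrix.head_cons,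
        Matrix.cons_val_two, Matrix.tail_cons, real_inner_smul_left, h0, h1, h2,
        mul_zero, add_zero]
    rw [hcc, real_inner_self_eq_norm_mul_norm, hn, mul_one] at h4
    exact one_ne_zero h4
  -- first-order condition at the minimum
  have hfd : ∀ i : Fin 4, HasFDerivAt (fun X : EuclideanSpace ℝ (Fin 3) => ‖X - A i‖)
      (‖A₀ - A i‖⁻¹ • (innerSL ℝ (A₀ - A i))) A₀ :=
    fun i => norm_sub_hasFDerivAt (A i) A₀ (fun h => hne i h.symm)
  have hsumfd : HasFDerivAt (fun X : EuclideanSpace ℝ (Fin 3) => ∑ i, B i * ‖X - A i‖)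
      (∑ i, B i • (‖A₀ - A i‖⁻¹ • (innerSL ℝ (A₀ - A i)))) A₀ :=
    HasFDerivAt.fun_sum fun i _ => (hfd i).const_mul (B i)
  have hloc : IsLocalMin (fun X : EuclideanSpace ℝ (Fin 3) => ∑ i, B i * ‖X - A i‖) A₀ :=
    Filter.Eventually.of_forall hmin
  have hzero : (∑ i, B i • (‖A₀ - A i‖⁻¹ • (innerSL ℝ (A₀ - A i)))) = 0 :=
    hloc.hasFDerivAt_eq_zero hsumfd
  have heval : ∀ n : EuclideanSpace ℝ (Fin 3), ∑ i, B i * ⟪u i, n⟫ = 0 := by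
    intro n
    have h := DFunLike.congr_fun hzero n
    simp only [ContinuousLinearMap.sum_apply, ContinuousLinearMap.smul_apply, innerSL_apply_apply,
      smul_eq_mul, ContinuousLinearMap.zero_apply] at h
    have : ∑ i, B i * ⟪u i, n⟫ = -∑ i, B i * (‖A₀ - A i‖⁻¹ * ⟪A₀ - A i, n⟫) := by
      rw [← Finset.sum_neg_distrib]
      refine Finset.sum_congr rfl fun i _ => ?_
      rw [hu i, real_inner_smul_left, norm_sub_rev (A₀) (A i)]
      have : ⟪A₀ - A i, n⟫ = -⟪A i - A₀, n⟫ := by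
        rw [← inner_neg_left, neg_sub]
      rw [this]
      ring
    rw [this, h, neg_zero]
  -- B 3
  have hB3 : B 3 = (c - B₀) / 2 := by linarith
  refine ⟨hB3, ?_, ?_, ?_⟩
  · obtain ⟨hn1, hp1, hp2⟩ := hn23
    have h0 : ⟪u 0, n23⟫ ≠ 0 := fun h => key n23 hn1 h hp1 hp2
    have h0' : |⟪u 0, n23⟫| ≠ 0 := abs_ne_zero.mpr h0
    have he := heval n23
    rw [Fin.sum_univ_four, hp1, hp2] at he
    have habs : B 0 * |⟪u 0, n23⟫| = B 3 * |⟪u 3, n23⟫| := by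
      have h5 : B 0 * ⟪u 0, n23⟫ = -(B 3 * ⟪u 3, n23⟫) := by linarith
      have h6 := congrArg abs h5
      rwa [abs_mul, abs_neg, abs_mul, abs_of_pos (hB 0), abs_of_pos (hB 3)] at h6
    rw [hB3] at habs
    rw [div_mul_eq_mul_div, eq_div_iff h0']
    linear_combination habs
  · obtain ⟨hn1, hp1, hp2⟩ := hn13
    have h0 : ⟪u 1, n13⟫ ≠ 0 := fun h => key n13 hn1 hp1 h hp2
    have h0' : |⟪u 1, n13⟫| ≠ 0 := abs_ne_zero.mpr h0
    have he := heval n13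
    rw [Fin.sum_univ_four, hp1, hp2] at he
    have habs : B 1 * |⟪u 1, n13⟫| = B 3 * |⟪u 3, n13⟫| := by
      have h5 : B 1 * ⟪u 1, n13⟫ = -(B 3 * ⟪u 3, n13⟫) := by linarith
      have h6 := congrArg abs h5
      rwa [abs_mul, abs_neg, abs_mul, abs_of_pos (hB 1), abs_of_pos (hB 3)] at h6
    rw [hB3] at habs
    rw [div_mul_eq_mul_div, eq_div_iff h0']
    linear_combination habs
  · obtain ⟨hn1, hp1, hp2⟩ := hn12
    have h0 : ⟪u 2, n12⟫ ≠ 0 := fun h => key n12 hn1 hp1 hp2 h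
    have h0' : |⟪u 2, n12⟫| ≠ 0 := abs_ne_zero.mpr h0
    have he := heval n12
    rw [Fin.sum_univ_four, hp1, hp2] at he
    have habs : B 2 * |⟪u 2, n12⟫| = B 3 * |⟪u 3, n12⟫| := by
      have h5 : B 2 * ⟪u 2, n12⟫ = -(B 3 * ⟪u 3, n12⟫) := by linarith
      have h6 := congrArg abs h5
      rwa [abs_mul, abs_neg, abs_mul, abs_of_pos (hB 2), abs_of_pos (hB 3)] at h6
    rw [hB3] at habs
    rw [div_mul_eq_mul_div, eq_div_iff h0']
    linear_combination habs
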